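/- arXiv:1307.7113 — 2 statements merged into one kernel-verified Lean document; each statement's English description precedes it below -/
import Mathlib

section
/- For every positive integer n, there is a bijection between the set of subgroups of index n of Γ̄(2) (the image of Γ(2) in PSL₂(ℤ)) and the set of equivalence classes of triples (σ, α, x), where σ and α are permutations of Fin n whose generated subgroup acts transitively on Fin n and x ∈ Fin n, with two triples (σ, α, x) and (σ', α', x') equivalent if and only if there exists a permutation π of Fin n with σ' = πσπ⁻¹, α' = παπ⁻¹, and x' = π(x). -/
/-- `SL(2, ℤ)`. -/
abbrev SL2Z := Matrix.SpecialLinearGroup (Fin 2) ℤ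

/-- `PSL₂(ℤ)`, the quotient of `SL(2, ℤ)` by its center `{±I}`. -/
abbrev PSL2Z := SL2Z ⧸ Subgroup.center SL2Z

/-- The projection `SL(2, ℤ) → PSL₂(ℤ)`. -/
def projSL : SL2Z →* PSL2Z := QuotientGroup.mk' (Subgroup.center SL2Z)

/-- `Γ̄(N)`, the image of the principal congruence subgroup `Γ(N)` in `PSL₂(ℤ)`. -/
def GammaBar (N : ℕ) : Subgroup PSL2Z := (CongruenceSubgroup.Gamma N).map projSL

/-- The matrix `A = [[1,2],[0,1]]` in `SL(2, ℤ)`. -/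
def matA : SL2Z := ⟨!![1, 2; 0, 1], by norm_num [Matrix.det_fin_two_of]⟩

/-- The matrix `B = [[1,0],[2,1]]` in `SL(2, ℤ)`. -/
def matB : SL2Z := ⟨!![1, 0; 2, 1], by norm_num [Matrix.det_fin_two_of]⟩

/-- The matrix `T = [[1,1],[0,1]]` in `SL(2, ℤ)`. -/
def matT : SL2Z := ⟨!![1, 1; 0, 1], by norm_num [Matrix.det_fin_two_of]⟩

/-- The matrix `L = [[1,0],[1,1]]` in `SL(2, ℤ)`. -/
def matL : SL2Z := ⟨!![1, 0; 1, 1], by norm_num [Matrix.det_fin_two_of]⟩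

/-- `Ā`, the image of `A` in `PSL₂(ℤ)`. -/
def Abar : PSL2Z := projSL matA

/-- `B̄`, the image of `B` in `PSL₂(ℤ)`. -/
def Bbar : PSL2Z := projSL matB



set_option linter.unreachableTactic false
set_option linter.unusedTactic false

def matAi : SL2Z := ⟨!![1, -2; 0, 1], by norm_num [Matrix.det_fin_two_of]⟩
def matBi : SL2Z := ⟨!![1, 0; -2, 1], by norm_num [Matrix.det_fin_two_of]⟩

lemma matA_val : (matA : Matrix (Fin 2) (Fin 2) ℤ) = !![1, 2; 0, 1] := rfl
lemma matB_val : (matB : Matrix (Fin 2) (Fin 2) ℤ) = !![1, 0; 2, 1] := rfl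
lemma matAi_val : (matAi : Matrix (Fin 2) (Fin 2) ℤ) = !![1, -2; 0, 1] := rfl
lemma matBi_val : (matBi : Matrix (Fin 2) (Fin 2) ℤ) = !![1, 0; -2, 1] := rfl

lemma matA_inv : matA⁻¹ = matAi := by
  apply inv_eq_of_mul_eq_one_right
  ext i j
  fin_cases i <;> fin_cases j <;>
    simp [matA_val, matAi_val, Matrix.SpecialLinearGroup.coe_mul, Matrix.mul_apply, Fin.sum_univ_two]

lemma matB_inv : matB⁻¹ = matBi := by
  apply inv_eq_of_mul_eq_one_right
  ext i j
  fin_cases i <;> fin_cases j <;>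
    simp [matB_val, matBi_val, Matrix.SpecialLinearGroup.coe_mul, Matrix.mul_apply, Fin.sum_univ_two]

/-- one generator letter -/
def gen (p : Bool × Bool) : SL2Z :=
  cond p.2 (cond p.1 matA matB) (cond p.1 matAi matBi)

/-- action on integer vectors -/
def act (M : SL2Z) (v : ℤ × ℤ) : ℤ × ℤ :=
  (M.1 0 0 * v.1 + M.1 0 1 * v.2, M.1 1 0 * v.1 + M.1 1 1 * v.2)

lemma act_one (v : ℤ × ℤ) : act 1 v = v := by
  simp [act, Matrix.SpecialLinearGroup.coe_one]

lemma act_mul (M N : SL2Z) (v : ℤ × ℤ) : act (M * N) v = act M (act N v) := by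
  simp only [act, Matrix.SpecialLinearGroup.coe_mul, Matrix.mul_apply, Fin.sum_univ_two]
  exact Prod.ext (by ring) (by ring)

def PPInv (p : Bool × Bool) (v : ℤ × ℤ) : Prop :=
  if p.1 then
    v.2.natAbs < v.1.natAbs ∧
      (if p.2 then (0 ≤ v.1 ∧ 0 ≤ v.2 ∨ v.1 ≤ 0 ∧ v.2 ≤ 0)
       else (0 ≤ v.1 ∧ v.2 ≤ 0 ∨ v.1 ≤ 0 ∧ 0 ≤ v.2))
  else
    v.1.natAbs < v.2.natAbs ∧
      (if p.2 then (0 ≤ v.1 ∧ 0 ≤ v.2 ∨ v.1 ≤ 0 ∧ v.2 ≤ 0)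
       else (0 ≤ v.1 ∧ v.2 ≤ 0 ∨ v.1 ≤ 0 ∧ 0 ≤ v.2))

def NoCancel (p q : Bool × Bool) : Prop := ¬(p.1 = q.1 ∧ p.2 = !q.2)

lemma pp_step (p q : Bool × Bool) (v : ℤ × ℤ) (h : NoCancel p q) (hv : PPInv q v) :
    PPInv p (act (gen p) v) := by
  obtain ⟨v1, v2⟩ := v
  obtain ⟨p1, p2⟩ := p
  obtain ⟨q1, q2⟩ := q
  simp only [NoCancel] at h
  cases p1 <;> cases p2 <;> cases q1 <;> cases q2 <;>
    simp_all [PPInv, gen, act, matA_val, matB_val, matAi_val, matBi_val] <;> omega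

lemma pp_base (p : Bool × Bool) (v : ℤ × ℤ) (hv : v = (1, 0) ∨ v = (0, 1)) :
    PPInv p (act (gen p) v) := by
  obtain ⟨p1, p2⟩ := p
  rcases hv with rfl | rfl <;> cases p1 <;> cases p2 <;>
    simp [PPInv, gen, act, matA_val, matB_val, matAi_val, matBi_val]

lemma pp_main (v : ℤ × ℤ) (hv : v = (1, 0) ∨ v = (0, 1)) :
    ∀ (L' : List (Bool × Bool)) (p : Bool × Bool), List.Chain' NoCancel (p :: L') →
      PPInv p (act (((p :: L').map gen).prod) v) := by
  intro L'
  induction L' with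
  | nil => intro p _; simpa [act] using pp_base p v hv
  | cons q t ih =>
    intro p hc
    have hR : NoCancel p q := (List.isChain_cons_cons.mp hc).1
    have hc' : List.Chain' NoCancel (q :: t) := (List.isChain_cons_cons.mp hc).2
    have hI := ih q hc'
    have hE : ((p :: q :: t).map gen).prod = gen p * (((q :: t)).map gen).prod := by simp
    rw [hE, act_mul]
    exact pp_step p q _ hR hI

lemma chain'_aux : ∀ L : List (Bool × Bool),
    (∀ (L1 L2 : List (Bool × Bool)) (x b : Bool), L ≠ L1 ++ (x, b) :: (x, !b) :: L2) →
    List.Chain' NoCancel L := by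
  intro L
  induction L with
  | nil => intro _; exact List.isChain_nil
  | cons p tail ih =>
    intro H
    match tail, ih with
    | [], _ => exact List.isChain_singleton _
    | q :: t, ih =>
      refine List.isChain_cons_cons.mpr ⟨?_, ih (fun L1 L2 x b hEq => H (p :: L1) L2 x b (by rw [hEq]; rfl)) ⟩
      rintro ⟨h1, h2⟩
      refine H [] t p.1 p.2 ?_
      simp only [List.nil_append]
      have : q = (p.1, !p.2) := by
        obtain ⟨q1, q2⟩ := q
        simp_all
      rw [this]

/-- The lift sending the generators to `matA`, `matB`. -/
def sanov : FreeGroup Bool →* SL2Z := FreeGroup.lift (fun b => cond b matA matB)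

lemma sanov_mk (L : List (Bool × Bool)) : sanov (FreeGroup.mk L) = (L.map gen).prod := by
  rw [sanov, FreeGroup.lift_mk]
  congr 1
  apply List.map_congr_left
  rintro ⟨x, b⟩ _
  cases x <;> cases b <;> simp [gen, matA_inv, matB_inv]

lemma sanov_injective : Function.Injective sanov := by
  rw [injective_iff_map_eq_one]
  intro w hw
  by_contra hne
  have hL : w.toWord ≠ [] := fun h => hne (FreeGroup.toWord_eq_nil_iff.mp h)
  obtain ⟨p, L', hE⟩ := List.exists_cons_of_ne_nil hL
  have hchain : List.Chain' NoCancel w.toWord := by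
    apply chain'_aux
    intro L1 L2 x b hEq
    have : FreeGroup.reduce w.toWord = L1 ++ (x, b) :: (x, !b) :: L2 := by
      rw [FreeGroup.reduce_toWord]; exact hEq
    exact FreeGroup.reduce.not this
  have h1 : sanov w = (w.toWord.map gen).prod := by
    conv_lhs => rw [← FreeGroup.mk_toWord (x := w)]
    exact sanov_mk _
  have hv : ∀ v : ℤ × ℤ, v = (1,0) ∨ v = (0,1) → PPInv p v := by
    intro v hvv
    have := pp_main v hvv L' p (hE ▸ hchain)
    rw [← hE, ← h1, hw, act_one] at this
    exact this
  obtain ⟨p1, p2⟩ := p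
  cases p1
  · have := hv (1, 0) (Or.inl rfl)
    simp [PPInv] at this
  · have := hv (0, 1) (Or.inr rfl)
    simp [PPInv] at this

-- center of SL2Z
lemma center_SL2Z (M : SL2Z) : M ∈ Subgroup.center SL2Z ↔ M = 1 ∨ M = -1 := by
  rw [Matrix.SpecialLinearGroup.mem_center_iff]
  constructor
  · rintro ⟨r, hr, hM⟩
    have h2 : r * r = 1 := by
      have : Fintype.card (Fin 2) = 2 := by simp
      rw [this] at hr; nlinarith [hr]
    have hr' : r = 1 ∨ r = -1 := by
      rcases Int.isUnit_iff.mp (IsUnit.of_mul_eq_one r h2) with h | h <;> [left; right] <;> exact h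
    rcases hr' with rfl | rfl
    · left
      apply Subtype.ext
      rw [← hM]
      ext i j
      simp [Matrix.scalar_apply, Matrix.one_apply, Matrix.diagonal]
    · right
      apply Subtype.ext
      rw [← hM]
      ext i j
      simp [Matrix.scalar_apply, Matrix.SpecialLinearGroup.coe_neg, Matrix.one_apply,
        Matrix.diagonal, Matrix.neg_apply]
  · rintro (rfl | rfl)
    · exact ⟨1, by simp, by apply Matrix.ext; intro i j; simp [Matrix.scalar_apply, Matrix.one_apply, Matrix.diagonal]⟩
    · refine ⟨-1, by simp [Fintype.card_fin], ?_⟩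
      apply Matrix.ext; intro i j
      simp [Matrix.scalar_apply, Matrix.SpecialLinearGroup.coe_neg, Matrix.one_apply,
        Matrix.diagonal, Matrix.neg_apply]

-- the mod-4 congruence subgroup containing ⟨A,B⟩ but not -1
def S4 : Subgroup SL2Z where
  carrier := {M | (4 : ℤ) ∣ (M.1 0 0 - 1) ∧ (4 : ℤ) ∣ (M.1 1 1 - 1) ∧
    (2 : ℤ) ∣ M.1 0 1 ∧ (2 : ℤ) ∣ M.1 1 0}
  one_mem' := by simp [Matrix.SpecialLinearGroup.coe_one, Matrix.one_apply]
  mul_mem' := by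
    rintro M N ⟨⟨k, hk⟩, ⟨l, hl⟩, ⟨m, hm⟩, ⟨p, hp⟩⟩ ⟨⟨k', hk'⟩, ⟨l', hl'⟩, ⟨m', hm'⟩, ⟨p', hp'⟩⟩
    have e00 : (M * N).1 0 0 = M.1 0 0 * N.1 0 0 + M.1 0 1 * N.1 1 0 := by
      simp [Matrix.SpecialLinearGroup.coe_mul, Matrix.mul_apply, Fin.sum_univ_two]
    have e01 : (M * N).1 0 1 = M.1 0 0 * N.1 0 1 + M.1 0 1 * N.1 1 1 := by
      simp [Matrix.SpecialLinearGroup.coe_mul, Matrix.mul_apply, Fin.sum_univ_two]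
    have e10 : (M * N).1 1 0 = M.1 1 0 * N.1 0 0 + M.1 1 1 * N.1 1 0 := by
      simp [Matrix.SpecialLinearGroup.coe_mul, Matrix.mul_apply, Fin.sum_univ_two]
    have e11 : (M * N).1 1 1 = M.1 1 0 * N.1 0 1 + M.1 1 1 * N.1 1 1 := by
      simp [Matrix.SpecialLinearGroup.coe_mul, Matrix.mul_apply, Fin.sum_univ_two]
    refine ⟨?_, ?_, ?_, ?_⟩
    · rw [e00]
      exact ⟨k + k' + 4*k*k' + m*p',
        by linear_combination (N.1 0 0) * hk + (4*k+1) * hk' + (N.1 1 0) * hm + (2*m) * hp'⟩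
    · rw [e11]
      exact ⟨l + l' + 4*l*l' + p*m',
        by linear_combination (N.1 0 1) * hp + (2*p) * hm' + (N.1 1 1) * hl + (4*l+1) * hl'⟩
    · rw [e01]
      exact ⟨m' + 4*k*m' + m + 4*m*l',
        by linear_combination (N.1 0 1) * hk + (4*k+1) * hm' + (N.1 1 1) * hm + (2*m) * hl'⟩
    · rw [e10]
      exact ⟨p + 4*p*k' + p' + 4*l*p',
        by linear_combination (N.1 0 0) * hp + (2*p) * hk' + (N.1 1 0) * hl + (4*l+1) * hp'⟩
  inv_mem' := by
    intro M hM
    obtain ⟨h1, h2, h3, h4⟩ := hM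
    rw [Matrix.SpecialLinearGroup.SL2_inv_expl]
    refine ⟨by simpa using h2, by simpa using h1, ?_, ?_⟩
    · simp only [Matrix.cons_val', Matrix.cons_val_zero, Matrix.cons_val_one, Matrix.head_cons,
        Matrix.empty_val', Matrix.cons_val_fin_one, Matrix.head_fin_const]
      omega
    · simp only [Matrix.cons_val', Matrix.cons_val_zero, Matrix.cons_val_one, Matrix.head_cons,
        Matrix.empty_val', Matrix.cons_val_fin_one, Matrix.head_fin_const]
      omega

lemma matA_mem_S4 : matA ∈ S4 := by
  refine ⟨?_, ?_, ?_, ?_⟩ <;> simp [matA_val, S4] <;> decide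
lemma matB_mem_S4 : matB ∈ S4 := by
  refine ⟨?_, ?_, ?_, ?_⟩ <;> simp [matB_val, S4] <;> decide
lemma negOne_not_mem_S4 : (-1 : SL2Z) ∉ S4 := by
  intro h
  obtain ⟨h1, -, -, -⟩ := h
  rw [Matrix.SpecialLinearGroup.coe_neg] at h1
  simp [Matrix.one_apply] at h1

-- product entry lemmas
lemma matA_mul (M : SL2Z) : (matA * M).1 =
    !![M.1 0 0 + 2*M.1 1 0, M.1 0 1 + 2*M.1 1 1; M.1 1 0, M.1 1 1] := by
  ext i j
  fin_cases i <;> fin_cases j <;>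
    simp [matA_val, Matrix.SpecialLinearGroup.coe_mul, Matrix.mul_apply, Fin.sum_univ_two] <;> ring
lemma matAi_mul (M : SL2Z) : (matAi * M).1 =
    !![M.1 0 0 - 2*M.1 1 0, M.1 0 1 - 2*M.1 1 1; M.1 1 0, M.1 1 1] := by
  ext i j
  fin_cases i <;> fin_cases j <;>
    simp [matAi_val, Matrix.SpecialLinearGroup.coe_mul, Matrix.mul_apply, Fin.sum_univ_two] <;> ring
lemma matB_mul (M : SL2Z) : (matB * M).1 =
    !![M.1 0 0, M.1 0 1; M.1 1 0 + 2*M.1 0 0, M.1 1 1 + 2*M.1 0 1] := by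
  ext i j
  fin_cases i <;> fin_cases j <;>
    simp [matB_val, Matrix.SpecialLinearGroup.coe_mul, Matrix.mul_apply, Fin.sum_univ_two] <;> ring
lemma matBi_mul (M : SL2Z) : (matBi * M).1 =
    !![M.1 0 0, M.1 0 1; M.1 1 0 - 2*M.1 0 0, M.1 1 1 - 2*M.1 0 1] := by
  ext i j
  fin_cases i <;> fin_cases j <;>
    simp [matBi_val, Matrix.SpecialLinearGroup.coe_mul, Matrix.mul_apply, Fin.sum_univ_two] <;> ring

lemma matA_inv' : matA⁻¹ = matAi := by
  apply inv_eq_of_mul_eq_one_right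
  ext i j
  fin_cases i <;> fin_cases j <;>
    simp [matA_val, matAi_val, Matrix.SpecialLinearGroup.coe_mul, Matrix.mul_apply, Fin.sum_univ_two]
lemma matB_inv' : matB⁻¹ = matBi := by
  apply inv_eq_of_mul_eq_one_right
  ext i j
  fin_cases i <;> fin_cases j <;>
    simp [matB_val, matBi_val, Matrix.SpecialLinearGroup.coe_mul, Matrix.mul_apply, Fin.sum_univ_two]

/-- the subgroup generated by A, B, -1 -/
def SABneg : Subgroup SL2Z := Subgroup.closure {matA, matB, -1}

lemma matA_mem : matA ∈ SABneg := Subgroup.subset_closure (by simp)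
lemma matB_mem : matB ∈ SABneg := Subgroup.subset_closure (by simp)
lemma negOne_mem : (-1 : SL2Z) ∈ SABneg := Subgroup.subset_closure (by simp)
lemma matAi_mem : matAi ∈ SABneg := matA_inv' ▸ inv_mem matA_mem
lemma matBi_mem : matBi ∈ SABneg := matB_inv' ▸ inv_mem matB_mem

lemma det_entry (M : SL2Z) : M.1 0 0 * M.1 1 1 - M.1 0 1 * M.1 1 0 = 1 := by
  have := M.2
  rwa [Matrix.det_fin_two] at this

/-- upper triangular case -/
lemma tri : ∀ k : ℕ, ∀ M : SL2Z, M.1 1 0 = 0 → M.1 0 0 = 1 → (2 : ℤ) ∣ M.1 0 1 →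
    (M.1 0 1).natAbs ≤ k → M ∈ SABneg := by
  intro k
  induction k with
  | zero =>
    intro M hc ha hb hk
    have hd : M.1 1 1 = 1 := by have := det_entry M; rw [ha, hc] at this; omega
    have hb0 : M.1 0 1 = 0 := by omega
    have : M = 1 := by
      apply Subtype.ext
      rw [Matrix.eta_fin_two M.1, ha, hb0, hc, hd]
      ext i j
      fin_cases i <;> fin_cases j <;> simp [Matrix.one_apply]
    rw [this]; exact one_mem _
  | succ k ih =>
    intro M hc ha hb hk
    have hd : M.1 1 1 = 1 := by have := det_entry M; rw [ha, hc] at this; omega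
    by_cases hb0 : M.1 0 1 = 0
    · have : M = 1 := by
        apply Subtype.ext
        rw [Matrix.eta_fin_two M.1, ha, hb0, hc, hd]
        ext i j
        fin_cases i <;> fin_cases j <;> simp [Matrix.one_apply]
      rw [this]; exact one_mem _
    · by_cases hpos : 0 < M.1 0 1
      · have hM' : M = matA * (matAi * M) := by
          rw [← mul_assoc, ← matA_inv', mul_inv_cancel, one_mul]
        rw [hM']
        refine mul_mem matA_mem (ih (matAi * M) ?_ ?_ ?_ ?_) <;>
          rw [matAi_mul] <;> simp [ha, hc, hd] <;> omega
      · have hM' : M = matAi * (matA * M) := by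
          rw [← mul_assoc, ← matA_inv', inv_mul_cancel, one_mul]
        rw [hM']
        refine mul_mem matAi_mem (ih (matA * M) ?_ ?_ ?_ ?_) <;>
          rw [matA_mul] <;> simp [ha, hc, hd] <;> omega

lemma descent : ∀ n : ℕ, ∀ M : SL2Z, (M.1 0 0).natAbs + (M.1 1 0).natAbs ≤ n →
    (2:ℤ) ∣ M.1 0 1 → (2:ℤ) ∣ M.1 1 0 → M ∈ SABneg := by
  intro n
  induction n with
  | zero =>
    intro M hm hb hc
    exfalso
    have ha : M.1 0 0 = 0 := by omega
    have hc0 : M.1 1 0 = 0 := by omega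
    have := det_entry M; rw [ha, hc0] at this; simp at this
  | succ n ih =>
    intro M hm hb hc
    have hdet := det_entry M
    obtain ⟨mm, hm2⟩ := id hb
    obtain ⟨pp, hp2⟩ := id hc
    have hodd : ¬ (2:ℤ) ∣ M.1 0 0 := by
      rintro ⟨t, ht⟩
      have h1 : (2:ℤ) ∣ 1 := ⟨t * M.1 1 1 - 2*(mm*pp), by
        rw [ht, hm2, hp2] at hdet; linear_combination -hdet⟩
      norm_num at h1
    by_cases hczero : M.1 1 0 = 0
    · have had : M.1 0 0 * M.1 1 1 = 1 := by rw [hczero] at hdet; linarith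
      rcases Int.mul_eq_one_iff_eq_one_or_neg_one.mp had with ⟨ha, hd⟩ | ⟨ha, hd⟩
      · exact tri (M.1 0 1).natAbs M hczero ha hb le_rfl
      · have hMeq : (-1 : SL2Z) * (-M) = M := by rw [neg_one_mul, neg_neg]
        rw [← hMeq]
        refine mul_mem negOne_mem (tri (M.1 0 1).natAbs (-M) ?_ ?_ ?_ ?_) <;>
          simp [Matrix.SpecialLinearGroup.coe_neg, Matrix.neg_apply, hczero, ha] <;> omega
    · rcases lt_or_gt_of_ne (show (M.1 1 0).natAbs ≠ (M.1 0 0).natAbs by omega) with hlt | hlt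
      · -- reduce a
        by_cases hsa : 0 ≤ M.1 0 0 <;> by_cases hsc : 0 ≤ M.1 1 0
        · have hMeq : M = matA * (matAi * M) := by
            rw [← mul_assoc, ← matA_inv', mul_inv_cancel, one_mul]
          rw [hMeq]
          refine mul_mem matA_mem (ih (matAi * M) ?_ ?_ ?_) <;>
            rw [matAi_mul] <;> simp <;> omega
        · have hMeq : M = matAi * (matA * M) := by
            rw [← mul_assoc, ← matA_inv', inv_mul_cancel, one_mul]
          rw [hMeq]
          refine mul_mem matAi_mem (ih (matA * M) ?_ ?_ ?_) <;>
            rw [matA_mul] <;> simp <;> omega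
        · have hMeq : M = matAi * (matA * M) := by
            rw [← mul_assoc, ← matA_inv', inv_mul_cancel, one_mul]
          rw [hMeq]
          refine mul_mem matAi_mem (ih (matA * M) ?_ ?_ ?_) <;>
            rw [matA_mul] <;> simp <;> omega
        · have hMeq : M = matA * (matAi * M) := by
            rw [← mul_assoc, ← matA_inv', mul_inv_cancel, one_mul]
          rw [hMeq]
          refine mul_mem matA_mem (ih (matAi * M) ?_ ?_ ?_) <;>
            rw [matAi_mul] <;> simp <;> omega
      · -- reduce c
        by_cases hsa : 0 ≤ M.1 0 0 <;> by_cases hsc : 0 ≤ M.1 1 0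
        · have hMeq : M = matB * (matBi * M) := by
            rw [← mul_assoc, ← matB_inv', mul_inv_cancel, one_mul]
          rw [hMeq]
          refine mul_mem matB_mem (ih (matBi * M) ?_ ?_ ?_) <;>
            rw [matBi_mul] <;> simp <;> omega
        · have hMeq : M = matBi * (matB * M) := by
            rw [← mul_assoc, ← matB_inv', inv_mul_cancel, one_mul]
          rw [hMeq]
          refine mul_mem matBi_mem (ih (matB * M) ?_ ?_ ?_) <;>
            rw [matB_mul] <;> simp <;> omega
        · have hMeq : M = matBi * (matB * M) := by
            rw [← mul_assoc, ← matB_inv', inv_mul_cancel, one_mul]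
          rw [hMeq]
          refine mul_mem matBi_mem (ih (matB * M) ?_ ?_ ?_) <;>
            rw [matB_mul] <;> simp <;> omega
        · have hMeq : M = matB * (matBi * M) := by
            rw [← mul_assoc, ← matB_inv', mul_inv_cancel, one_mul]
          rw [hMeq]
          refine mul_mem matB_mem (ih (matBi * M) ?_ ?_ ?_) <;>
            rw [matBi_mul] <;> simp <;> omega


lemma Gamma_two_eq : CongruenceSubgroup.Gamma 2 = SABneg := by
  apply le_antisymm
  · intro M hM
    rw [CongruenceSubgroup.Gamma_mem] at hM
    obtain ⟨h1, h2, h3, h4⟩ := hM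
    have hb : (2:ℤ) ∣ M.1 0 1 := by
      have := (ZMod.intCast_zmod_eq_zero_iff_dvd (M.1 0 1) 2).mp h2
      exact_mod_cast this
    have hc : (2:ℤ) ∣ M.1 1 0 := by
      have := (ZMod.intCast_zmod_eq_zero_iff_dvd (M.1 1 0) 2).mp h3
      exact_mod_cast this
    exact descent _ M le_rfl hb hc
  · rw [SABneg, Subgroup.closure_le]
    intro x hx
    simp only [Set.mem_insert_iff, Set.mem_singleton_iff] at hx
    rcases hx with rfl | rfl | rfl <;>
      · rw [SetLike.mem_coe, CongruenceSubgroup.Gamma_mem]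
        refine ⟨?_, ?_, ?_, ?_⟩ <;>
          simp [matA_val, matB_val, Matrix.SpecialLinearGroup.coe_neg, Matrix.neg_apply,
            Matrix.one_apply] <;> decide

lemma projSL_negOne : projSL (-1 : SL2Z) = 1 := by
  rw [projSL, QuotientGroup.mk'_apply, QuotientGroup.eq_one_iff]
  exact (center_SL2Z (-1)).mpr (Or.inr rfl)

/-- the composite homomorphism `FreeGroup Bool → PSL₂(ℤ)` -/
def psi : FreeGroup Bool →* PSL2Z := projSL.comp sanov

lemma sanov_range : sanov.range = Subgroup.closure {matA, matB} := by
  rw [sanov, FreeGroup.range_lift_eq_closure]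
  congr 1
  ext x
  simp [Bool.exists_bool, or_comm]

lemma sanov_range_le_S4 : sanov.range ≤ S4 := by
  rw [sanov_range, Subgroup.closure_le]
  rintro x (rfl | rfl)
  · exact matA_mem_S4
  · exact matB_mem_S4

lemma psi_injective : Function.Injective psi := by
  rw [injective_iff_map_eq_one]
  intro w hw
  apply sanov_injective
  rw [map_one]
  have hcen : sanov w ∈ Subgroup.center SL2Z := by
    have : projSL (sanov w) = 1 := hw
    rwa [projSL, QuotientGroup.mk'_apply, QuotientGroup.eq_one_iff] at this
  rcases (center_SL2Z _).mp hcen with h | h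
  · exact h
  · exfalso
    apply negOne_not_mem_S4
    rw [← h]
    exact sanov_range_le_S4 ⟨w, rfl⟩

lemma psi_range : psi.range = GammaBar 2 := by
  rw [GammaBar, Gamma_two_eq, SABneg, MonoidHom.map_closure]
  rw [psi, MonoidHom.range_comp, sanov_range, MonoidHom.map_closure]
  have himg : projSL '' {matA, matB, -1} = insert (1 : PSL2Z) (projSL '' {matA, matB}) := by
    rw [Set.image_insert_eq, Set.image_insert_eq, Set.image_insert_eq, Set.image_singleton,
      projSL_negOne]
    ext x; simp; tauto
  rw [himg]
  apply le_antisymm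
  · exact Subgroup.closure_mono (Set.subset_insert _ _)
  · rw [Subgroup.closure_le]
    rintro x (rfl | hx)
    · exact one_mem _
    · exact Subgroup.subset_closure hx


/-- Triples `(σ, α, x)` of two permutations of `Fin n` generating a subgroup acting
transitively on `Fin n`, together with a marked point `x`. -/
def TransTriple (n : ℕ) :=
  {t : Equiv.Perm (Fin n) × Equiv.Perm (Fin n) × Fin n //
    ∀ i j : Fin n, ∃ π ∈ Subgroup.closure ({t.1, t.2.1} : Set (Equiv.Perm (Fin n))), π i = j}

/-- Two triples are equivalent iff they are simultaneously conjugate by a permutation. -/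
def TripleRel (n : ℕ) (t t' : TransTriple n) : Prop :=
  ∃ π : Equiv.Perm (Fin n),
    t'.1.1 = π * t.1.1 * π⁻¹ ∧ t'.1.2.1 = π * t.1.2.1 * π⁻¹ ∧ t'.1.2.2 = π t.1.2.2

section Corr

variable {n : ℕ} {G : Type*} [Group G] (e : FreeGroup Bool ≃* G)

/-- the hom `FreeGroup Bool →* Perm (Fin n)` determined by a triple -/
def permHom (t : TransTriple n) : FreeGroup Bool →* Equiv.Perm (Fin n) :=
  FreeGroup.lift (fun b => cond b t.1.1 t.1.2.1)

lemma permHom_of_true (t : TransTriple n) : permHom t (FreeGroup.of true) = t.1.1 := by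
  simp [permHom]

lemma permHom_of_false (t : TransTriple n) : permHom t (FreeGroup.of false) = t.1.2.1 := by
  simp [permHom]

lemma permHom_range (t : TransTriple n) :
    (permHom t).range = Subgroup.closure {t.1.1, t.1.2.1} := by
  rw [permHom, FreeGroup.range_lift_eq_closure]
  congr 1
  ext x
  simp [Bool.exists_bool, or_comm]

/-- the action hom of `G` on `Fin n` induced by a triple -/
def rhoT (t : TransTriple n) : G →* Equiv.Perm (Fin n) :=
  (permHom t).comp e.symm.toMonoidHom

/-- the subgroup associated to a triple -/
def HofT (t : TransTriple n) : Subgroup G :=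
  Subgroup.comap (rhoT e t) (MulAction.stabilizer (Equiv.Perm (Fin n)) t.1.2.2)

lemma mem_HofT (t : TransTriple n) (g : G) :
    g ∈ HofT e t ↔ rhoT e t g t.1.2.2 = t.1.2.2 := by
  rw [HofT, Subgroup.mem_comap, MulAction.mem_stabilizer_iff, Equiv.Perm.smul_def]

lemma exists_g (t : TransTriple n) (i j : Fin n) : ∃ g : G, rhoT e t g i = j := by
  obtain ⟨π, hπ, hij⟩ := t.2 i j
  rw [← permHom_range] at hπ
  obtain ⟨w, hw⟩ := hπ
  refine ⟨e w, ?_⟩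
  simp only [rhoT, MonoidHom.comp_apply, MulEquiv.coe_toMonoidHom, MulEquiv.symm_apply_apply]
  rw [hw]; exact hij

lemma HofT_index (t : TransTriple n) : (HofT e t).index = n := by
  letI : MulAction G (Fin n) := MulAction.compHom _ (rhoT e t)
  haveI : MulAction.IsPretransitive G (Fin n) := by
    constructor
    intro i j
    obtain ⟨g, hg⟩ := exists_g e t i j
    exact ⟨g, by rw [MulAction.compHom_smul_def, Equiv.Perm.smul_def]; exact hg⟩
  have hst : HofT e t = MulAction.stabilizer G t.1.2.2 := by
    ext g
    rw [mem_HofT, MulAction.mem_stabilizer_iff, MulAction.compHom_smul_def, Equiv.Perm.smul_def]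
  rw [hst, MulAction.index_stabilizer_of_transitive, Nat.card_eq_fintype_card, Fintype.card_fin]

lemma HofT_rel (t t' : TransTriple n) (h : TripleRel n t t') : HofT e t = HofT e t' := by
  obtain ⟨π, hσ, hα, hx⟩ := h
  have key : ∀ w : FreeGroup Bool, permHom t' w = π * permHom t w * π⁻¹ := by
    intro w
    have : permHom t' = ((MulAut.conj π).toMonoidHom).comp (permHom t) := by
      apply FreeGroup.ext_hom
      intro a
      cases a <;>
        simp [permHom_of_true, permHom_of_false, hσ, hα, MulAut.conj_apply]
    rw [this]; rfl
  ext g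
  rw [mem_HofT, mem_HofT]
  simp only [rhoT, MonoidHom.comp_apply, MulEquiv.coe_toMonoidHom]
  rw [key, hx]
  simp [Equiv.Perm.mul_apply]

/-- equivalence of the coset space with `Fin n` -/
noncomputable def qEquiv (H : Subgroup G) (hH : H.index = n) (hn : 0 < n) : G ⧸ H ≃ Fin n := by
  have hcard : Nat.card (G ⧸ H) = n := by rw [← Subgroup.index_eq_card]; exact hH
  haveI : Finite (G ⧸ H) := (Nat.card_pos_iff.mp (by omega)).2
  exact Finite.equivFinOfCardEq hcard

/-- the permutation action of `G` on `Fin n` through a coset equivalence -/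
def rhoH {H : Subgroup G} (q : G ⧸ H ≃ Fin n) : G →* Equiv.Perm (Fin n) :=
  MonoidHom.mk' (fun g => q.permCongr (MulAction.toPermHom G (G ⧸ H) g))
    (by
      intro a b
      ext u
      simp [Equiv.permCongr_apply, Equiv.Perm.mul_apply, MulAction.toPermHom,
        MulAction.toPerm, mul_smul])

lemma rhoH_apply {H : Subgroup G} (q : G ⧸ H ≃ Fin n) (g : G) (c : G ⧸ H) :
    rhoH q g (q c) = q (g • c) := by
  simp [rhoH, Equiv.permCongr_apply, MulAction.toPermHom, MulAction.toPerm]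

/-- the triple associated to a subgroup (with a chosen coset equivalence) -/
def tripleOfQ (H : Subgroup G) (q : G ⧸ H ≃ Fin n) : TransTriple n := by
  refine ⟨(rhoH q (e (FreeGroup.of true)), rhoH q (e (FreeGroup.of false)), q (((1 : G) : G ⧸ H))), ?_⟩
  intro i j
  obtain ⟨g, hg⟩ := MulAction.exists_smul_eq G (q.symm i) (q.symm j)
  set ψ : FreeGroup Bool →* Equiv.Perm (Fin n) := (rhoH q).comp e.toMonoidHom with hψ
  have hclose : Subgroup.closure ({rhoH q (e (FreeGroup.of true)), rhoH q (e (FreeGroup.of false))}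
      : Set (Equiv.Perm (Fin n))) = ψ.range := by
    have hext : ψ = FreeGroup.lift
        (fun b => cond b (rhoH q (e (FreeGroup.of true))) (rhoH q (e (FreeGroup.of false)))) := by
      apply FreeGroup.ext_hom
      intro a
      cases a <;> simp [hψ]
    rw [hext, FreeGroup.range_lift_eq_closure]
    congr 1
    ext x
    simp [Bool.exists_bool, or_comm]
  refine ⟨rhoH q g, ?_, ?_⟩
  · rw [hclose]
    exact ⟨e.symm g, by simp [hψ]⟩
  · have : rhoH q g (q (q.symm i)) = q (g • q.symm i) := rhoH_apply q g _
    rw [Equiv.apply_symm_apply] at this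
    rw [this, hg, Equiv.apply_symm_apply]

lemma HofT_tripleOfQ (H : Subgroup G) (q : G ⧸ H ≃ Fin n) :
    HofT e (tripleOfQ e H q) = H := by
  have hperm : permHom (tripleOfQ e H q) = (rhoH q).comp e.toMonoidHom := by
    apply FreeGroup.ext_hom
    intro a
    cases a <;> simp [tripleOfQ, permHom]
  ext g
  rw [mem_HofT]
  have h1 : rhoT e (tripleOfQ e H q) g = rhoH q g := by
    rw [rhoT, MonoidHom.comp_apply, hperm]
    simp
  have h2 : (tripleOfQ e H q).1.2.2 = q (((1 : G) : G ⧸ H)) := rfl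
  rw [h1, h2, rhoH_apply, MulAction.Quotient.smul_mk]
  rw [q.apply_eq_iff_eq, QuotientGroup.eq]
  simp

lemma rel_tripleOfQ (t : TransTriple n) (q : G ⧸ (HofT e t) ≃ Fin n) :
    TripleRel n t (tripleOfQ e (HofT e t) q) := by
  -- the equivariant bijection G ⧸ (HofT e t) → Fin n
  have wd : ∀ a b : G, @Setoid.r _ (QuotientGroup.leftRel (HofT e t)) a b →
      rhoT e t a t.1.2.2 = rhoT e t b t.1.2.2 := by
    intro a b hab
    rw [QuotientGroup.leftRel_apply] at hab
    rw [mem_HofT] at hab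
    have : b = a * (a⁻¹ * b) := by group
    rw [this, map_mul, Equiv.Perm.mul_apply, hab]
  set fθ : G ⧸ (HofT e t) → Fin n := fun c => Quotient.liftOn' c (fun g => rhoT e t g t.1.2.2) wd with hfθ
  have fθ_mk : ∀ g : G, fθ ((g : G) : G ⧸ (HofT e t)) = rhoT e t g t.1.2.2 := fun g => rfl
  have hbij : Function.Bijective fθ := by
    constructor
    · intro c c'
      induction c using Quotient.inductionOn' with | h a =>
      induction c' using Quotient.inductionOn' with | h b =>
      intro hab
      rw [show (Quotient.mk'' a : G ⧸ (HofT e t)) = ((a : G) : G ⧸ (HofT e t)) from rfl,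
        show (Quotient.mk'' b : G ⧸ (HofT e t)) = ((b : G) : G ⧸ (HofT e t)) from rfl] at *
      rw [fθ_mk, fθ_mk] at hab
      rw [QuotientGroup.eq]
      rw [mem_HofT, map_mul, map_inv, Equiv.Perm.mul_apply, ← hab]
      simp
    · intro i
      obtain ⟨g, hg⟩ := exists_g e t t.1.2.2 i
      exact ⟨((g : G) : G ⧸ (HofT e t)), by rw [fθ_mk, hg]⟩
  set θ : G ⧸ (HofT e t) ≃ Fin n := Equiv.ofBijective fθ hbij with hθ
  have θ_mk : ∀ g : G, θ ((g : G) : G ⧸ (HofT e t)) = rhoT e t g t.1.2.2 := fun g => rfl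
  have hkey : ∀ (g₀ : G) (c : G ⧸ (HofT e t)), θ (g₀ • c) = rhoT e t g₀ (θ c) := by
    intro g₀ c
    induction c using Quotient.inductionOn' with | h a =>
    rw [show (Quotient.mk'' a : G ⧸ (HofT e t)) = ((a : G) : G ⧸ (HofT e t)) from rfl,
      MulAction.Quotient.smul_mk, θ_mk, θ_mk, smul_eq_mul, map_mul, Equiv.Perm.mul_apply]
  refine ⟨θ.symm.trans q, ?_, ?_, ?_⟩
  · apply Equiv.ext
    intro u
    show rhoH q (e (FreeGroup.of true)) u = _
    set π : Equiv.Perm (Fin n) := (θ.symm.trans q : Fin n ≃ Fin n) with hπ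
    set c : G ⧸ (HofT e t) := q.symm u with hc
    have hu : u = q c := by rw [hc, Equiv.apply_symm_apply]
    have hπinv : π⁻¹ u = θ c := by
      simp [hπ, hc, Equiv.Perm.inv_def]
    rw [Equiv.Perm.mul_apply, Equiv.Perm.mul_apply, hπinv, hu, rhoH_apply]
    have h1 : t.1.1 (θ c) = θ (e (FreeGroup.of true) • c) := by
      rw [hkey]
      congr 1
      rw [rhoT, MonoidHom.comp_apply]
      simp [permHom_of_true]
    rw [h1]
    show q (e (FreeGroup.of true) • c) = π (θ (e (FreeGroup.of true) • c))
    simp [hπ]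
  · apply Equiv.ext
    intro u
    show rhoH q (e (FreeGroup.of false)) u = _
    set π : Equiv.Perm (Fin n) := (θ.symm.trans q : Fin n ≃ Fin n) with hπ
    set c : G ⧸ (HofT e t) := q.symm u with hc
    have hu : u = q c := by rw [hc, Equiv.apply_symm_apply]
    have hπinv : π⁻¹ u = θ c := by
      simp [hπ, hc, Equiv.Perm.inv_def]
    rw [Equiv.Perm.mul_apply, Equiv.Perm.mul_apply, hπinv, hu, rhoH_apply]
    have h1 : t.1.2.1 (θ c) = θ (e (FreeGroup.of false) • c) := by
      rw [hkey]
      congr 1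
      rw [rhoT, MonoidHom.comp_apply]
      simp [permHom_of_false]
    rw [h1]
    show q (e (FreeGroup.of false) • c) = π (θ (e (FreeGroup.of false) • c))
    simp [hπ]
  · show q (((1 : G) : G ⧸ (HofT e t))) = (θ.symm.trans q) t.1.2.2
    have : θ.symm t.1.2.2 = ((1 : G) : G ⧸ (HofT e t)) := by
      apply θ.injective
      rw [Equiv.apply_symm_apply, θ_mk, map_one]
      rfl
    simp [Equiv.trans_apply, this]

/-- the correspondence, for an abstract group isomorphic to the free group on two letters -/
noncomputable def corrEquiv (hn : 0 < n) :
    {H : Subgroup G // H.index = n} ≃ Quot (TripleRel n) where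
  toFun := fun p => Quot.mk _ (tripleOfQ e p.1 (qEquiv p.1 p.2 hn))
  invFun := Quot.lift (fun t => ⟨HofT e t, HofT_index e t⟩)
    (fun t t' h => Subtype.ext (HofT_rel e t t' h))
  left_inv := by
    rintro ⟨H, hH⟩
    exact Subtype.ext (HofT_tripleOfQ e H _)
  right_inv := by
    apply Quot.ind
    intro t
    exact (Quot.sound (rel_tripleOfQ e t _)).symm

end Corr

/-- The isomorphism of the free group on two generators with `Γ̄(2)`. -/
noncomputable def eIso : FreeGroup Bool ≃* (GammaBar 2) :=
  (MonoidHom.ofInjective psi_injective).trans (MulEquiv.subgroupCongr psi_range)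

/-- Birch's correspondence: subgroups of index `n` of `Γ̄(2)` are in bijection with
equivalence classes of transitive marked triples of permutations of `Fin n`. -/
theorem birch_correspondence (n : ℕ) (hn : 0 < n) :
    Nonempty ({H : Subgroup (GammaBar 2) // H.index = n} ≃ Quot (TripleRel n)) :=
  ⟨corrEquiv eIso hn⟩
end

section
/- Let Γ be a finite-index subgroup of Γ̄(2) in PSL₂(ℤ) which is congruence of level 2n, i.e., 2n is the smallest positive integer N with Γ̄(N) ≤ Γ. Let g be any element of Γ̄(2), and let P be either B̄ or ĀB̄⁻¹ (parabolic elements of Γ̄(2) fixing the cusps 0 and 1, respectively). Let d be the least positive integer with g·Ā^d·g⁻¹ ∈ Γ and e be the least positive integer with g·P^e·g⁻¹ ∈ Γ. Then n divides 2·d·e. -/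
/-! ### Auxiliary material -/

open Matrix CongruenceSubgroup

section Aux

/-- upper triangular unipotent matrices -/
def uT (j : ℤ) : SL2Z := ⟨!![1, j; 0, 1], by norm_num [Matrix.det_fin_two_of]⟩
/-- lower triangular unipotent matrices -/
def uL (j : ℤ) : SL2Z := ⟨!![1, 0; j, 1], by norm_num [Matrix.det_fin_two_of]⟩

lemma uT_mul (a b : ℤ) : uT a * uT b = uT (a + b) := by
  apply Subtype.ext
  rw [Matrix.SpecialLinearGroup.coe_mul]
  simp [uT, Matrix.mul_fin_two, add_comm]

lemma uL_mul (a b : ℤ) : uL a * uL b = uL (a + b) := by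
  apply Subtype.ext
  rw [Matrix.SpecialLinearGroup.coe_mul]
  simp [uL, Matrix.mul_fin_two, add_comm]

lemma uT_zero : uT 0 = 1 := by
  apply Subtype.ext
  simp [uT, Matrix.one_fin_two]

lemma uL_zero : uL 0 = 1 := by
  apply Subtype.ext
  simp [uL, Matrix.one_fin_two]

lemma uT_inv (a : ℤ) : (uT a)⁻¹ = uT (-a) := by
  apply inv_eq_of_mul_eq_one_right
  rw [uT_mul]; simp [uT_zero]

lemma uL_inv (a : ℤ) : (uL a)⁻¹ = uL (-a) := by
  apply inv_eq_of_mul_eq_one_right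
  rw [uL_mul]; simp [uL_zero]

lemma congr_uT {a b : ℤ} (h : a = b) : uT a = uT b := by rw [h]
lemma congr_uL {a b : ℤ} (h : a = b) : uL a = uL b := by rw [h]

lemma uT_pow (a : ℤ) (k : ℕ) : uT a ^ k = uT (a * k) := by
  induction k with
  | zero => simp [uT_zero]
  | succ m ih => rw [pow_succ, ih, uT_mul]; exact congr_uT (by push_cast; ring)

lemma uT_zpow (a : ℤ) (k : ℤ) : uT a ^ k = uT (a * k) := by
  cases k with
  | ofNat m => simpa using uT_pow a m
  | negSucc m => rw [zpow_negSucc, uT_pow, uT_inv]; exact congr_uT (by rw [Int.negSucc_eq]; push_cast; ring)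

lemma uL_pow (a : ℤ) (k : ℕ) : uL a ^ k = uL (a * k) := by
  induction k with
  | zero => simp [uL_zero]
  | succ m ih => rw [pow_succ, ih, uL_mul]; exact congr_uL (by push_cast; ring)

lemma uL_zpow (a : ℤ) (k : ℤ) : uL a ^ k = uL (a * k) := by
  cases k with
  | ofNat m => simpa using uL_pow a m
  | negSucc m => rw [zpow_negSucc, uL_pow, uL_inv]; exact congr_uL (by rw [Int.negSucc_eq]; push_cast; ring)

local notation "SLMOD(" N ")" =>
  @Matrix.SpecialLinearGroup.map (Fin 2) _ _ _ _ _ _ (Int.castRingHom (ZMod N))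

lemma red_uT (N : ℕ) (j : ℤ) :
    ((SLMOD(N) (uT j) : Matrix.SpecialLinearGroup (Fin 2) (ZMod N)) : Matrix (Fin 2) (Fin 2) (ZMod N))
      = !![1, (j : ZMod N); 0, 1] := by
  ext r c
  rw [SL_reduction_mod_hom_val]
  fin_cases r <;> fin_cases c <;> simp [uT]

lemma red_uL (N : ℕ) (j : ℤ) :
    ((SLMOD(N) (uL j) : Matrix.SpecialLinearGroup (Fin 2) (ZMod N)) : Matrix (Fin 2) (Fin 2) (ZMod N))
      = !![1, 0; (j : ZMod N), 1] := by
  ext r c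
  rw [SL_reduction_mod_hom_val]
  fin_cases r <;> fin_cases c <;> simp [uL]

lemma red_entries (N : ℕ) (x : SL2Z) :
    ((SLMOD(N) x : Matrix.SpecialLinearGroup (Fin 2) (ZMod N)) : Matrix (Fin 2) (Fin 2) (ZMod N))
      = !![((x 0 0 : ℤ) : ZMod N), ((x 0 1 : ℤ) : ZMod N); ((x 1 0 : ℤ) : ZMod N), ((x 1 1 : ℤ) : ZMod N)] := by
  ext r c
  rw [SL_reduction_mod_hom_val]
  fin_cases r <;> fin_cases c <;> simp
lemma factor_entries {R : Type*} [CommRing R] (a0 b0 c0 d0 x v w iv : R)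
    (hdet : a0 * d0 - b0 * c0 = 1)
    (hi : (a0 + x * c0) * iv = 1)
    (hvw : v * w = iv - 1) :
    (!![a0, b0; c0, d0] : Matrix (Fin 2) (Fin 2) R) =
      !![1, -x; 0, 1] * !![1, 0; c0 * iv, 1] * !![1, -(w * (a0 + x * c0)); 0, 1] * !![1, 0; v, 1]
        * !![1, w; 0, 1] * !![1, 0; -(v * (a0 + x * c0)), 1] * !![1, iv * (b0 + x * d0); 0, 1] := by
  simp only [Matrix.mul_fin_two]
  ext r c
  fin_cases r <;> fin_cases c <;> simp only [Matrix.cons_val', Matrix.cons_val_zero,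
    Matrix.cons_val_one, Matrix.head_cons, Matrix.head_fin_const, Matrix.empty_val',
    Matrix.cons_val_fin_one, Matrix.of_apply, Fin.mk_zero, Fin.mk_one, Fin.isValue, Matrix.cons_val_zero, Matrix.cons_val_one, Matrix.head_cons]
  · linear_combination (1 - 1*v*x - 2*v*w*c0*x + v*w*c0*c0*x*x - 1*v*w*a0 + v*w*a0*c0*x + v*v*w*w*c0*c0*x*x + v*v*w*w*a0*c0*x) * hi + (a0 - 1*v*c0*x*x - 1*v*a0*x - 1*v*w*a0*c0*x - 1*v*w*a0*a0) * hvw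
  · linear_combination (d0*x + w - 1*w*c0*x - 1*v*d0*x*x - 1*v*b0*x + v*w*d0*x + v*w*b0 - 1*v*w*a0*d0*x - 1*v*w*a0*b0 - 2*v*w*iv*c0*d0*x*x + v*w*iv*c0*c0*d0*x*x*x - 2*v*w*iv*b0*c0*x + v*w*iv*b0*c0*c0*x*x + v*w*iv*a0*c0*d0*x*x + v*w*iv*a0*b0*c0*x - 1*v*w*w*c0*x - 1*v*v*w*d0*x*x - 1*v*v*w*b0*x - 1*v*v*w*w*a0*d0*x - 1*v*v*w*w*a0*b0 + v*v*w*w*iv*c0*c0*d0*x*x*x + v*v*w*w*iv*b0*c0*c0*x*x + v*v*w*w*iv*a0*c0*d0*x*x + v*v*w*w*iv*a0*b0*c0*x) * hi + (d0*x + b0 - 1*b0*c0*x + a0*d0*x - 1*iv*c0*d0*x*x - 1*iv*b0*c0*x + w*a0 - 1*v*d0*x*x - 1*v*b0*x - 1*v*w*a0*d0*x - 1*v*w*a0*b0) * hvw + (-1*x - 1*v*w*x) * hdet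
  · linear_combination (v + v*w*c0 - 1*v*w*c0*c0*x - 1*v*w*a0*c0 - 1*v*v*w*w*c0*c0*x - 1*v*v*w*w*a0*c0) * hi + (c0 + v*c0*x + v*a0 - 1*v*w*c0*c0*x - 1*v*w*a0*c0) * hvw
  · linear_combination (-1*d0 + w*c0 + v*d0*x + v*b0 - 1*v*w*c0*d0*x - 1*v*w*b0*c0 + 2*v*w*iv*c0*d0*x - 1*v*w*iv*c0*c0*d0*x*x + 2*v*w*iv*b0*c0 - 1*v*w*iv*b0*c0*c0*x - 1*v*w*iv*a0*c0*d0*x - 1*v*w*iv*a0*b0*c0 + v*w*w*c0 + v*v*w*d0*x + v*v*w*b0 - 1*v*v*w*w*c0*d0*x - 1*v*v*w*w*b0*c0 - 1*v*v*w*w*iv*c0*c0*d0*x*x - 1*v*v*w*w*iv*b0*c0*c0*x - 1*v*v*w*w*iv*a0*c0*d0*x - 1*v*v*w*w*iv*a0*b0*c0) * hi + (b0*c0 - 1*a0*d0 + iv*c0*d0*x + iv*b0*c0 + w*c0 + v*d0*x + v*b0 - 1*v*w*c0*d0*x - 1*v*w*b0*c0) * hvw + (1 + v*w) * hdet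

lemma coprime_combination (Nn : ℕ) (hN : Nn ≠ 0) (α w : ℤ)
    (h : ∀ p : ℕ, p.Prime → (p : ℤ) ∣ (Nn : ℤ) → (p : ℤ) ∣ α → ¬(p : ℤ) ∣ w) :
    ∃ X : ℤ, IsCoprime (α + X * w) ((Nn : ℤ)) := by
  set s : Finset ℕ := Nn.primeFactors.filter (fun p => ¬(p : ℤ) ∣ α) with hs
  refine ⟨((∏ p ∈ s, p : ℕ) : ℤ), ?_⟩
  rw [Int.isCoprime_iff_gcd_eq_one]
  by_contra hg
  -- get a prime divisor of the gcd
  set v : ℤ := α + (((∏ p ∈ s, p : ℕ) : ℤ)) * w with hv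
  have hg0 : Int.gcd v (Nn : ℤ) ≠ 0 := by
    intro h0
    rw [Int.gcd_eq_zero_iff] at h0
    exact hN (by exact_mod_cast h0.2)
  set q : ℕ := (Int.gcd v (Nn : ℤ)).minFac with hq
  have hqprime : q.Prime := Nat.minFac_prime hg
  have hqgcd : (q : ℤ) ∣ Int.gcd v (Nn : ℤ) := Int.natCast_dvd_natCast.mpr (Nat.minFac_dvd _)
  have hqv : (q : ℤ) ∣ v := hqgcd.trans (Int.gcd_dvd_left _ _)
  have hqN : (q : ℤ) ∣ (Nn : ℤ) := hqgcd.trans (Int.gcd_dvd_right _ _)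
  have hqNnat : q ∣ Nn := Int.natCast_dvd_natCast.mp hqN
  have hqZprime : Prime (q : ℤ) := Int.prime_iff_natAbs_prime.mpr (by simpa using hqprime)
  by_cases hqa : (q : ℤ) ∣ α
  · -- q does not divide w, nor the product
    have hqw : ¬(q : ℤ) ∣ w := h q hqprime hqN hqa
    have hqprod : ¬ q ∣ (∏ p ∈ s, p) := by
      intro hdvd
      obtain ⟨p, hps, hqp⟩ := (Nat.Prime.prime hqprime).dvd_finset_prod_iff _ |>.mp hdvd
      have : q = p := (Nat.prime_dvd_prime_iff_eq hqprime
        (Nat.prime_of_mem_primeFactors (Finset.mem_filter.mp hps).1)).mp hqp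
      subst this
      exact (Finset.mem_filter.mp hps).2 hqa
    have : (q : ℤ) ∣ (((∏ p ∈ s, p : ℕ) : ℤ)) * w := by
      have : (q : ℤ) ∣ v - α := dvd_sub hqv hqa
      simpa [hv] using this
    rcases hqZprime.dvd_mul.mp this with h1 | h1
    · exact hqprod (Int.natCast_dvd_natCast.mp h1)
    · exact hqw h1
  · have hmem : q ∈ s := by
      rw [hs, Finset.mem_filter]
      exact ⟨Nat.mem_primeFactors.mpr ⟨hqprime, hqNnat, hN⟩, hqa⟩
    have hqprod : (q : ℤ) ∣ (((∏ p ∈ s, p : ℕ) : ℤ)) :=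
      Int.natCast_dvd_natCast.mpr (Finset.dvd_prod_of_mem _ hmem)
    have : (q : ℤ) ∣ α := by
      have : (q : ℤ) ∣ v - (((∏ p ∈ s, p : ℕ) : ℤ)) * w := dvd_sub hqv (hqprod.mul_right w)
      simpa [hv] using this
    exact hqa this

lemma key (Nn dd ee : ℕ) (hN : Nn ≠ 0) (x : SL2Z)
    (hx : x ∈ Gamma (Nat.gcd Nn (2 * dd * (2 * ee)))) :
    ∃ (j1 j2 j3 j4 j5 j6 j7 : ℤ) (y : SL2Z), y ∈ Gamma Nn ∧
      x = y * (uT (2 * dd * j1) * uL (2 * ee * j2) * uT (2 * dd * j3) * uL (2 * ee * j4) *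
        uT (2 * dd * j5) * uL (2 * ee * j6) * uT (2 * dd * j7)) := by
  set m : ℕ := Nat.gcd Nn (2 * dd * (2 * ee)) with hm
  set a0 : ℤ := x 0 0 with ha0
  set b0 : ℤ := x 0 1 with hb0
  set c0 : ℤ := x 1 0 with hc0
  set d0 : ℤ := x 1 1 with hd0
  have hdet : a0 * d0 - b0 * c0 = 1 := by
    have := x.2
    rwa [Matrix.det_fin_two] at this
  rw [Gamma_mem] at hx
  obtain ⟨hx1, hx2, hx3, hx4⟩ := hx
  obtain ⟨α₂, hα⟩ : (m : ℤ) ∣ (a0 - 1) := by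
    rw [← ZMod.intCast_zmod_eq_zero_iff_dvd]
    push_cast
    rw [hx1]; ring
  obtain ⟨β₂, hβ⟩ : (m : ℤ) ∣ b0 := by
    rw [← ZMod.intCast_zmod_eq_zero_iff_dvd]; exact_mod_cast hx2
  obtain ⟨γ₂, hγ⟩ : (m : ℤ) ∣ c0 := by
    rw [← ZMod.intCast_zmod_eq_zero_iff_dvd]; exact_mod_cast hx3
  have hp : ∀ p : ℕ, p.Prime → (p : ℤ) ∣ (Nn : ℤ) → (p : ℤ) ∣ a0 → ¬(p : ℤ) ∣ ((2 * dd : ℤ) * c0) := by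
    intro p pp hpN hpa hpc
    have ppZ : Prime (p : ℤ) := Int.prime_iff_natAbs_prime.mpr (by simpa using pp)
    rcases ppZ.dvd_mul.mp hpc with h1 | h1
    · have hp4 : (p : ℤ) ∣ ((2 * dd * (2 * ee) : ℕ) : ℤ) := by
        push_cast
        exact Dvd.dvd.mul_right h1 _
      have hpm : (p : ℤ) ∣ (m : ℤ) := by
        have h5 : p ∣ 2 * dd * (2 * ee) := by exact_mod_cast hp4
        have h6 : p ∣ Nn := by exact_mod_cast hpN
        exact_mod_cast Nat.dvd_gcd h6 h5
      have hone : (p : ℤ) ∣ 1 := by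
        have h7 : (p : ℤ) ∣ a0 - 1 := hpm.trans ⟨α₂, hα⟩
        have := dvd_sub hpa h7
        simpa using this
      exact ppZ.not_dvd_one hone
    · have : (p : ℤ) ∣ 1 := by
        have h2 : (p : ℤ) ∣ a0 * d0 := hpa.mul_right d0
        have h3 : (p : ℤ) ∣ b0 * c0 := h1.mul_left b0
        calc (p : ℤ) ∣ a0 * d0 - b0 * c0 := dvd_sub h2 h3
        _ = 1 := hdet
      exact ppZ.not_dvd_one this
  obtain ⟨X, hcop⟩ := coprime_combination Nn hN a0 ((2 * dd : ℤ) * c0) hp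
  obtain ⟨pc, qc, hbez⟩ := hcop
  set g : ℤ := Nat.gcdB Nn (2 * dd * (2 * ee)) with hg
  -- fully-pushed base facts in R := ZMod Nn
  have hdP : ((a0 : ZMod Nn)) * ((d0 : ZMod Nn)) - ((b0 : ZMod Nn)) * ((c0 : ZMod Nn)) = 1 := by
    exact_mod_cast congrArg (fun t : ℤ => ((t : ℤ) : ZMod Nn)) hdet
  have hiP : (((a0 : ZMod Nn)) + 2 * (dd : ZMod Nn) * ((X : ZMod Nn)) * ((c0 : ZMod Nn)))
      * ((pc : ZMod Nn)) = 1 := by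
    have hc := congrArg (fun t : ℤ => ((t : ℤ) : ZMod Nn)) hbez
    push_cast [ZMod.natCast_self] at hc
    linear_combination hc
  have hmP : ((m : ZMod Nn)) = 2 * (dd : ZMod Nn) * (2 * (ee : ZMod Nn)) * ((g : ZMod Nn)) := by
    have hc := congrArg (fun t : ℤ => ((t : ℤ) : ZMod Nn)) (Nat.gcd_eq_gcd_ab Nn (2 * dd * (2 * ee)))
    push_cast [ZMod.natCast_self] at hc
    rw [hm, hg]
    push_cast
    linear_combination hc
  have hAP : ((a0 : ZMod Nn)) = 1 + (m : ZMod Nn) * ((α₂ : ZMod Nn)) := by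
    have : a0 = 1 + (m : ℤ) * α₂ := by linarith [hα]
    rw [this]; push_cast; ring
  have hBP : ((b0 : ZMod Nn)) = (m : ZMod Nn) * ((β₂ : ZMod Nn)) := by
    rw [hβ]; push_cast; ring
  have hCP : ((c0 : ZMod Nn)) = (m : ZMod Nn) * ((γ₂ : ZMod Nn)) := by
    rw [hγ]; push_cast; ring
  -- the unit and its inverse
  -- choose integer exponents
  obtain ⟨j2, hj2⟩ := ZMod.intCast_surjective (n := Nn)
    (2 * (dd : ZMod Nn) * (g : ZMod Nn) * (γ₂ : ZMod Nn) * (pc : ZMod Nn))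
  obtain ⟨j3, hj3⟩ := ZMod.intCast_surjective (n := Nn)
    (-((a0 : ZMod Nn) + 2 * (dd : ZMod Nn) * (X : ZMod Nn) * (c0 : ZMod Nn)))
  obtain ⟨j4, hj4⟩ := ZMod.intCast_surjective (n := Nn)
    (-((pc : ZMod Nn) * (g : ZMod Nn) * ((α₂ : ZMod Nn) + 2 * (dd : ZMod Nn) * (X : ZMod Nn) * (γ₂ : ZMod Nn))))
  obtain ⟨j6, hj6⟩ := ZMod.intCast_surjective (n := Nn)
    ((pc : ZMod Nn) * (g : ZMod Nn) * ((α₂ : ZMod Nn) + 2 * (dd : ZMod Nn) * (X : ZMod Nn) * (γ₂ : ZMod Nn))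
      * ((a0 : ZMod Nn) + 2 * (dd : ZMod Nn) * (X : ZMod Nn) * (c0 : ZMod Nn)))
  obtain ⟨j7, hj7⟩ := ZMod.intCast_surjective (n := Nn)
    ((pc : ZMod Nn) * (2 * (ee : ZMod Nn) * (g : ZMod Nn) * (β₂ : ZMod Nn) + (X : ZMod Nn) * (d0 : ZMod Nn)))
  refine ⟨-X, j2, j3, j4, 1, j6, j7, ?_⟩
  -- the word
  set wrd : SL2Z := uT (2 * dd * (-X)) * uL (2 * ee * j2) * uT (2 * dd * j3) * uL (2 * ee * j4) *
        uT (2 * dd * (1 : ℤ)) * uL (2 * ee * j6) * uT (2 * dd * j7) with hwrd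
  have hred : SLMOD(Nn) x = SLMOD(Nn) wrd := by
    apply Subtype.ext
    rw [hwrd]
    rw [_root_.map_mul, _root_.map_mul, _root_.map_mul, _root_.map_mul, _root_.map_mul, _root_.map_mul]
    rw [Matrix.SpecialLinearGroup.coe_mul, Matrix.SpecialLinearGroup.coe_mul,
      Matrix.SpecialLinearGroup.coe_mul, Matrix.SpecialLinearGroup.coe_mul,
      Matrix.SpecialLinearGroup.coe_mul, Matrix.SpecialLinearGroup.coe_mul]
    rw [red_entries, red_uT, red_uL, red_uT, red_uL, red_uT, red_uL, red_uT]
    -- rewrite the seven slots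
    have s1 : ((2 * (dd : ℕ) * (-X : ℤ) : ℤ) : ZMod Nn)
        = -(2 * (dd : ZMod Nn) * (X : ZMod Nn)) := by push_cast; ring
    have s2 : ((2 * (ee : ℕ) * j2 : ℤ) : ZMod Nn) = (c0 : ZMod Nn) * (pc : ZMod Nn) := by
      push_cast [hj2]
      rw [hCP]
      linear_combination (-(γ₂ : ZMod Nn)) * (pc : ZMod Nn) * hmP
    have s3 : ((2 * (dd : ℕ) * j3 : ℤ) : ZMod Nn)
        = -((2 * (dd : ZMod Nn)) * ((a0 : ZMod Nn) + 2 * (dd : ZMod Nn) * (X : ZMod Nn) * (c0 : ZMod Nn))) := by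
      push_cast [hj3]; ring
    have s4 : ((2 * (ee : ℕ) * j4 : ℤ) : ZMod Nn)
        = 2 * (ee : ZMod Nn) * (-((pc : ZMod Nn) * (g : ZMod Nn) * ((α₂ : ZMod Nn) + 2 * (dd : ZMod Nn) * (X : ZMod Nn) * (γ₂ : ZMod Nn)))) := by
      push_cast [hj4]; ring
    have s5 : ((2 * (dd : ℕ) * (1 : ℤ) : ℤ) : ZMod Nn) = 2 * (dd : ZMod Nn) := by
      push_cast; ring
    have s6 : ((2 * (ee : ℕ) * j6 : ℤ) : ZMod Nn)
        = -((2 * (ee : ZMod Nn) * (-((pc : ZMod Nn) * (g : ZMod Nn) * ((α₂ : ZMod Nn) + 2 * (dd : ZMod Nn) * (X : ZMod Nn) * (γ₂ : ZMod Nn)))))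
            * ((a0 : ZMod Nn) + 2 * (dd : ZMod Nn) * (X : ZMod Nn) * (c0 : ZMod Nn))) := by
      push_cast [hj6]; ring
    have s7 : ((2 * (dd : ℕ) * j7 : ℤ) : ZMod Nn)
        = (pc : ZMod Nn) * ((b0 : ZMod Nn) + 2 * (dd : ZMod Nn) * (X : ZMod Nn) * (d0 : ZMod Nn)) := by
      push_cast [hj7]
      rw [hBP]
      linear_combination (-(pc : ZMod Nn)) * (β₂ : ZMod Nn) * hmP
    rw [s1, s2, s3, s4, s5, s6, s7]
    have hvw : (2 * (ee : ZMod Nn) * (-((pc : ZMod Nn) * (g : ZMod Nn) * ((α₂ : ZMod Nn) + 2 * (dd : ZMod Nn) * (X : ZMod Nn) * (γ₂ : ZMod Nn)))))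
        * (2 * (dd : ZMod Nn)) = (pc : ZMod Nn) - 1 := by
      linear_combination (-1 : ZMod Nn) * hiP + (pc : ZMod Nn) * hAP
        + (pc : ZMod Nn) * (2 * (dd : ZMod Nn) * (X : ZMod Nn)) * hCP
        + (pc : ZMod Nn) * ((α₂ : ZMod Nn) + 2 * (dd : ZMod Nn) * (X : ZMod Nn) * (γ₂ : ZMod Nn)) * hmP
    exact factor_entries (a0 : ZMod Nn) (b0 : ZMod Nn) (c0 : ZMod Nn) (d0 : ZMod Nn)
      (2 * (dd : ZMod Nn) * (X : ZMod Nn))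
      (2 * (ee : ZMod Nn) * (-((pc : ZMod Nn) * (g : ZMod Nn) * ((α₂ : ZMod Nn) + 2 * (dd : ZMod Nn) * (X : ZMod Nn) * (γ₂ : ZMod Nn)))))
      (2 * (dd : ZMod Nn)) (pc : ZMod Nn) hdP hiP hvw
  refine ⟨x * wrd⁻¹, ?_, by group⟩
  rw [Gamma_mem', _root_.map_mul, _root_.map_inv, ← hred]
  simp

/-! ### PSL level glue -/

lemma projSL_surjective : Function.Surjective projSL :=
  QuotientGroup.mk'_surjective _

lemma GammaBar_normal (N : ℕ) : (GammaBar N).Normal :=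
  (Gamma_normal N).map projSL projSL_surjective

/-- the central element `-1` -/
def negOne : SL2Z := ⟨!![-1, 0; 0, -1], by norm_num [Matrix.det_fin_two_of]⟩

lemma negOne_coe : ((negOne : SL2Z) : Matrix (Fin 2) (Fin 2) ℤ) = -(1 : Matrix (Fin 2) (Fin 2) ℤ) := by
  simp only [negOne]
  ext i j
  fin_cases i <;> fin_cases j <;> simp

lemma negOne_central : negOne ∈ Subgroup.center SL2Z := by
  rw [Subgroup.mem_center_iff]
  intro h
  apply Subtype.ext
  rw [Matrix.SpecialLinearGroup.coe_mul, Matrix.SpecialLinearGroup.coe_mul, negOne_coe,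
    Matrix.neg_mul, Matrix.mul_neg, Matrix.one_mul, Matrix.mul_one]

lemma projSL_negOne_mul (a : SL2Z) : projSL (a * negOne) = projSL a := by
  have h : projSL negOne = 1 := (QuotientGroup.eq_one_iff negOne).mpr negOne_central
  rw [_root_.map_mul, h, mul_one]

lemma matA_eq : matA = uT 2 := rfl
lemma matB_eq : matB = uL 2 := rfl
lemma matT_eq : matT = uT 1 := rfl

lemma projSL_uT_zpow (dd : ℕ) (k : ℤ) : projSL (uT (2 * dd * k)) = (Abar ^ dd) ^ k := by
  have h1 : Abar ^ dd = projSL (uT (2 * dd)) := by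
    rw [Abar, matA_eq, ← map_pow, uT_pow]
  rw [h1, ← map_zpow, uT_zpow]

lemma projSL_uL_zpow (ee : ℕ) (k : ℤ) : projSL (uL (2 * ee * k)) = (Bbar ^ ee) ^ k := by
  have h1 : Bbar ^ ee = projSL (uL (2 * ee)) := by
    rw [Bbar, matB_eq, ← map_pow, uL_pow]
  rw [h1, ← map_zpow, uL_zpow]

lemma matB_inv_s4 : matB⁻¹ = (⟨!![1, 0; -2, 1], by norm_num [Matrix.det_fin_two_of]⟩ : SL2Z) := by
  apply inv_eq_of_mul_eq_one_right
  apply Subtype.ext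
  erw [Matrix.SpecialLinearGroup.coe_mul]
  simp [matB, Matrix.mul_fin_two, Matrix.one_fin_two]

lemma TB_conj : projSL matT * Bbar * (projSL matT)⁻¹ = Abar * Bbar⁻¹ := by
  have h1 : matT * matB = matA * matB⁻¹ * matT * negOne := by
    rw [matB_inv_s4]
    apply Subtype.ext
    erw [Matrix.SpecialLinearGroup.coe_mul, Matrix.SpecialLinearGroup.coe_mul, Matrix.SpecialLinearGroup.coe_mul, Matrix.SpecialLinearGroup.coe_mul]
    simp [matA, matB, matT, negOne, Matrix.mul_fin_two]
  have h2 : projSL (matT * matB) = projSL (matA * matB⁻¹ * matT) := by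
    rw [h1, projSL_negOne_mul]
  have h3 : projSL matT * Bbar = Abar * Bbar⁻¹ * projSL matT := by
    rw [Bbar, ← _root_.map_mul, h2]
    rw [_root_.map_mul, _root_.map_mul, _root_.map_inv]
    rfl
  rw [h3]
  group

lemma conj_zpow_eq (a h : PSL2Z) (k : ℤ) : a * h ^ k * a⁻¹ = (a * h * a⁻¹) ^ k := by
  rw [← MulAut.conj_apply, ← MulAut.conj_apply, map_zpow]

/-- Master lemma : everything in `Γ̄(gcd)` is reachable. -/
lemma master (Δ : Subgroup PSL2Z) (Nn dd ee : ℕ) (hN : Nn ≠ 0)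
    (hG : ∀ y : SL2Z, y ∈ Gamma Nn → projSL y ∈ Δ)
    (HA : ∀ k : ℤ, projSL (uT (2 * dd * k)) ∈ Δ)
    (HB : ∀ k : ℤ, projSL (uL (2 * ee * k)) ∈ Δ) :
    ∀ y : SL2Z, y ∈ Gamma (Nat.gcd Nn (2 * dd * (2 * ee))) → projSL y ∈ Δ := by
  intro y hy
  obtain ⟨j1, j2, j3, j4, j5, j6, j7, z, hz, rfl⟩ := key Nn dd ee hN y hy
  rw [_root_.map_mul, _root_.map_mul, _root_.map_mul, _root_.map_mul, _root_.map_mul,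
    _root_.map_mul, _root_.map_mul]
  exact Subgroup.mul_mem _ (hG z hz) (Subgroup.mul_mem _ (Subgroup.mul_mem _ (Subgroup.mul_mem _
    (Subgroup.mul_mem _ (Subgroup.mul_mem _ (Subgroup.mul_mem _ (HA j1) (HB j2)) (HA j3))
      (HB j4)) (HA j5)) (HB j6)) (HA j7))

/-! ### The main theorem -/

/-- Generalized Larcher criterion: let `Γ ≤ Γ̄(2)` be a finite-index congruence subgroup of
level `2n`, let `g ∈ Γ̄(2)` and let `P` be `B̄` or `ĀB̄⁻¹`. If `d` is the least positive
integer with `g·Ā^d·g⁻¹ ∈ Γ` and `e` the least positive integer with `g·P^e·g⁻¹ ∈ Γ`, then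
`n ∣ 2·d·e`. -/
theorem larcher_generalized (Γ : Subgroup PSL2Z) (hsub : Γ ≤ GammaBar 2)
    (hfin : Γ.relIndex (GammaBar 2) ≠ 0) (n : ℕ)
    (hlevel : IsLeast {N : ℕ | 0 < N ∧ GammaBar N ≤ Γ} (2 * n))
    (g : PSL2Z) (hg : g ∈ GammaBar 2) (P : PSL2Z) (hP : P = Bbar ∨ P = Abar * Bbar⁻¹)
    (d e : ℕ)
    (hd : IsLeast {k : ℕ | 0 < k ∧ g * Abar ^ k * g⁻¹ ∈ Γ} d)
    (he : IsLeast {k : ℕ | 0 < k ∧ g * P ^ k * g⁻¹ ∈ Γ} e) :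
    n ∣ 2 * d * e := by
  have hNpos : 0 < 2 * n := hlevel.1.1
  have hN : 2 * n ≠ 0 := hNpos.ne'
  have hGam : GammaBar (2 * n) ≤ Γ := hlevel.1.2
  have hdmem : g * Abar ^ d * g⁻¹ ∈ Γ := hd.1.2
  have hemem : g * P ^ e * g⁻¹ ∈ Γ := he.1.2
  -- choose the conjugator
  obtain ⟨c, hcA, hcB⟩ : ∃ c : PSL2Z,
      (∀ k : ℤ, c * (Abar ^ d) ^ k * c⁻¹ ∈ Γ) ∧ (∀ k : ℤ, c * (Bbar ^ e) ^ k * c⁻¹ ∈ Γ) := by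
    rcases hP with rfl | rfl
    · refine ⟨g, fun k => ?_, fun k => ?_⟩
      · rw [conj_zpow_eq]
        exact Subgroup.zpow_mem _ hdmem k
      · rw [conj_zpow_eq]
        exact Subgroup.zpow_mem _ hemem k
    · refine ⟨g * projSL matT, fun k => ?_, fun k => ?_⟩
      · have hcomm : projSL matT * Abar ^ d * (projSL matT)⁻¹ = Abar ^ d := by
          have : matT * matA ^ d = matA ^ d * matT := by
            rw [matT_eq, matA_eq, uT_pow, uT_mul, uT_mul, add_comm]
          have h4 : projSL matT * Abar ^ d = Abar ^ d * projSL matT := by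
            rw [Abar, ← map_pow, ← _root_.map_mul, this, _root_.map_mul]
          rw [h4]; group
        have h5 : (g * projSL matT) * (Abar ^ d) ^ k * (g * projSL matT)⁻¹
            = g * (projSL matT * (Abar ^ d) ^ k * (projSL matT)⁻¹) * g⁻¹ := by group
        rw [h5, conj_zpow_eq, hcomm, conj_zpow_eq]
        exact Subgroup.zpow_mem _ hdmem k
      · have h5 : (g * projSL matT) * (Bbar ^ e) ^ k * (g * projSL matT)⁻¹
            = g * (projSL matT * (Bbar ^ e) ^ k * (projSL matT)⁻¹) * g⁻¹ := by group
        have h6 : projSL matT * (Bbar ^ e) ^ k * (projSL matT)⁻¹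
            = ((Abar * Bbar⁻¹) ^ e) ^ k := by
          rw [← MulAut.conj_apply, map_zpow, map_pow, MulAut.conj_apply, TB_conj]
        rw [h5, h6, conj_zpow_eq]
        exact Subgroup.zpow_mem _ hemem k
  -- the conjugated subgroup
  set Δ : Subgroup PSL2Z := Γ.comap (MulAut.conj c).toMonoidHom with hΔ
  have hmem : ∀ y : PSL2Z, c * y * c⁻¹ ∈ Γ → y ∈ Δ := by
    intro y h
    rw [hΔ, Subgroup.mem_comap]
    simpa [MulAut.conj_apply] using h
  have hG : ∀ y : SL2Z, y ∈ CongruenceSubgroup.Gamma (2 * n) → projSL y ∈ Δ := by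
    intro y hy
    apply hmem
    apply hGam
    exact (GammaBar_normal (2 * n)).conj_mem _ (Subgroup.mem_map_of_mem projSL hy) c
  have HA : ∀ k : ℤ, projSL (uT (2 * d * k)) ∈ Δ := by
    intro k
    apply hmem
    rw [projSL_uT_zpow]
    exact hcA k
  have HB : ∀ k : ℤ, projSL (uL (2 * e * k)) ∈ Δ := by
    intro k
    apply hmem
    rw [projSL_uL_zpow]
    exact hcB k
  set m : ℕ := Nat.gcd (2 * n) (2 * d * (2 * e)) with hm
  have hsub2 : GammaBar m ≤ Γ := by
    intro yb hyb
    have h1 : c⁻¹ * yb * c ∈ GammaBar m := by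
      have := (GammaBar_normal m).conj_mem yb hyb c⁻¹
      simpa using this
    obtain ⟨y2, hy2, hy2e⟩ := Subgroup.mem_map.mp h1
    have h2 := master Δ (2 * n) d e hN hG HA HB y2 hy2
    rw [hy2e] at h2
    rw [hΔ, Subgroup.mem_comap] at h2
    simp only [MulEquiv.coe_toMonoidHom, MulAut.conj_apply] at h2
    have h4 : c * (c⁻¹ * yb * c) * c⁻¹ = yb := by group
    rwa [h4] at h2
  have hmpos : 0 < m := Nat.gcd_pos_of_pos_left _ hNpos
  have hle : 2 * n ≤ m := hlevel.2 ⟨hmpos, hsub2⟩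
  have hdvd : m ∣ 2 * n := Nat.gcd_dvd_left _ _
  have heq : m = 2 * n := le_antisymm (Nat.le_of_dvd hNpos hdvd) hle
  have hfinal : 2 * n ∣ 2 * d * (2 * e) := heq ▸ Nat.gcd_dvd_right (2 * n) (2 * d * (2 * e))
  rw [show 2 * d * (2 * e) = 2 * (2 * d * e) by ring] at hfinal
  exact (Nat.mul_dvd_mul_iff_left (by norm_num : 0 < 2)).mp hfinal
end Aux
end
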